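/- Every bounded operator from c₀(Γ) into a separable Banach space E factors through c₀: there exist bounded operators U : c₀(Γ) → c₀ and V : c₀ → E with T = V ∘ U. -/

import Mathlib

open scoped ZeroAtInfty
open Function Filter Set

namespace C0FactorAux

variable {Γ : Type*} [TopologicalSpace Γ] [DiscreteTopology Γ]

lemma apply_le_norm (x : C₀(Γ, ℝ)) (γ : Γ) : |x γ| ≤ ‖x‖ := by
  rw [← Real.norm_eq_abs, ← ZeroAtInftyContinuousMap.norm_toBCF_eq_norm]
  exact BoundedContinuousFunction.norm_coe_le_norm x.toBCF γ

lemma norm_le_of (x : C₀(Γ, ℝ)) {C : ℝ} (h0 : 0 ≤ C) (h : ∀ γ, |x γ| ≤ C) : ‖x‖ ≤ C := by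
  rw [← ZeroAtInftyContinuousMap.norm_toBCF_eq_norm]
  exact (BoundedContinuousFunction.norm_le h0).mpr (by simpa [Real.norm_eq_abs] using h)

/-- Evaluation as an additive monoid hom. -/
def evalAM (γ : Γ) : C₀(Γ, ℝ) →+ ℝ where
  toFun f := f γ
  map_zero' := rfl
  map_add' _ _ := rfl

lemma coe_sum {ι : Type*} (F : Finset ι) (f : ι → C₀(Γ, ℝ)) (γ : Γ) :
    (∑ i ∈ F, f i) γ = ∑ i ∈ F, f i γ :=
  map_sum (evalAM γ) f F

lemma finite_norm_ge (x : C₀(Γ, ℝ)) {ε : ℝ} (hε : 0 < ε) :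
    {γ : Γ | ε ≤ |x γ|}.Finite := by
  have h := zero_at_infty (F := C₀(Γ, ℝ)) x
  rw [Filter.cocompact_eq_cofinite] at h
  have h2 : (⇑x) ⁻¹' Metric.ball (0 : ℝ) ε ∈ Filter.cofinite :=
    Filter.mem_map.mp (h (Metric.ball_mem_nhds (0 : ℝ) hε))
  rw [Filter.mem_cofinite] at h2
  refine h2.subset fun γ hγ => ?_
  simp only [mem_compl_iff, mem_preimage, Metric.mem_ball, Real.dist_eq, sub_zero, not_lt]
  exact hγ

/-- The "standard basis vector" at `γ`. -/
noncomputable def sgl (γ : Γ) : C₀(Γ, ℝ) where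
  toFun := Set.indicator {γ} (fun _ => (1 : ℝ))
  continuous_toFun := continuous_of_discreteTopology
  zero_at_infty' := by
    rw [Filter.cocompact_eq_cofinite]
    refine tendsto_const_nhds.congr' ?_
    filter_upwards [(Set.finite_singleton γ).eventually_cofinite_notMem] with γ' hγ'
    exact (Set.indicator_of_notMem hγ' _).symm

@[simp] lemma sgl_apply_self (γ : Γ) : sgl γ γ = 1 := by
  show Set.indicator ({γ} : Set Γ) (fun _ => (1 : ℝ)) γ = 1
  simp

lemma sgl_apply_ne (γ γ' : Γ) (h : γ' ≠ γ) : sgl γ γ' = 0 := by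
  show Set.indicator ({γ} : Set Γ) (fun _ => (1 : ℝ)) γ' = 0
  simp [h]

/-- Each functional on `c₀(Γ)` has countable support on the basis vectors. -/
lemma countable_support (f : C₀(Γ, ℝ) →L[ℝ] ℝ) :
    {γ : Γ | f (sgl γ) ≠ 0}.Countable := by
  classical
  have hsum : Summable fun γ : Γ => |f (sgl γ)| := by
    refine summable_of_sum_le (c := ‖f‖) (fun γ => abs_nonneg _) fun F => ?_
    set s : Γ → ℝ := fun γ => if f (sgl γ) < 0 then -1 else 1 with hs
    set v : C₀(Γ, ℝ) := ∑ γ ∈ F, s γ • sgl γ with hv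
    have hvγ : ∀ γ' : Γ, v γ' = if γ' ∈ F then s γ' else 0 := by
      intro γ'
      rw [hv, coe_sum, ← Finset.sum_ite_eq' F γ' s]
      refine Finset.sum_congr rfl fun γ _ => ?_
      simp only [ZeroAtInftyContinuousMap.coe_smul, Pi.smul_apply, smul_eq_mul]
      by_cases h : γ = γ'
      · subst h; simp
      · simp [h, sgl_apply_ne γ γ' (Ne.symm h)]
    have hvnorm : ‖v‖ ≤ 1 := by
      refine norm_le_of v one_pos.le fun γ' => ?_
      rw [hvγ]
      split_ifs
      · rw [hs]; dsimp only; split_ifs <;> norm_num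
      · norm_num
    have hfv : f v = ∑ γ ∈ F, |f (sgl γ)| := by
      rw [hv, map_sum]
      refine Finset.sum_congr rfl fun γ _ => ?_
      rw [map_smul, smul_eq_mul, hs]
      rcases lt_or_ge (f (sgl γ)) 0 with h | h
      · simp [h, abs_of_neg h]
      · simp [not_lt.mpr h, abs_of_nonneg h]
    calc ∑ γ ∈ F, |f (sgl γ)| = f v := hfv.symm
      _ ≤ |f v| := le_abs_self _
      _ ≤ ‖f‖ * ‖v‖ := by simpa [Real.norm_eq_abs] using f.le_opNorm v
      _ ≤ ‖f‖ := by nlinarith [norm_nonneg f]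
  have := hsum.countable_support
  refine this.mono fun γ hγ => ?_
  simp only [Function.mem_support] at *
  simpa [abs_ne_zero] using hγ

/-- A functional kills any function vanishing on its support. -/
lemma apply_eq_zero (f : C₀(Γ, ℝ) →L[ℝ] ℝ) (z : C₀(Γ, ℝ))
    (hz : ∀ γ, f (sgl γ) ≠ 0 → z γ = 0) : f z = 0 := by
  classical
  have key : ∀ ε : ℝ, 0 < ε → |f z| ≤ ‖f‖ * ε := by
    intro ε hε
    set F := (finite_norm_ge z hε).toFinset with hF
    set zF : C₀(Γ, ℝ) := ∑ γ ∈ F, z γ • sgl γ with hzF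
    have hfzF : f zF = 0 := by
      rw [hzF, map_sum]
      refine Finset.sum_eq_zero fun γ _ => ?_
      rw [map_smul, smul_eq_mul]
      rcases eq_or_ne (f (sgl γ)) 0 with h | h
      · rw [h, mul_zero]
      · rw [hz γ h, zero_mul]
    have hzFγ : ∀ γ' : Γ, zF γ' = if γ' ∈ F then z γ' else 0 := by
      intro γ'
      rw [hzF, coe_sum, ← Finset.sum_ite_eq' F γ' (fun γ => z γ)]
      refine Finset.sum_congr rfl fun γ _ => ?_
      simp only [ZeroAtInftyContinuousMap.coe_smul, Pi.smul_apply, smul_eq_mul]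
      by_cases h : γ = γ'
      · subst h; simp
      · simp [h, sgl_apply_ne γ γ' (Ne.symm h)]
    have hnorm : ‖z - zF‖ ≤ ε := by
      refine norm_le_of _ hε.le fun γ => ?_
      have : (z - zF) γ = z γ - zF γ := rfl
      rw [this, hzFγ]
      split_ifs with h
      · simpa using hε.le
      · have : ¬ ε ≤ |z γ| := by
          intro hc
          exact h (by rw [hF]; simpa using hc)
        simpa using (not_le.mp this).le
    calc |f z| = |f (z - zF)| := by rw [map_sub, hfzF, sub_zero]
      _ ≤ ‖f‖ * ‖z - zF‖ := by simpa [Real.norm_eq_abs] using f.le_opNorm (z - zF)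
      _ ≤ ‖f‖ * ε := by nlinarith [norm_nonneg f]
  have hle : |f z| ≤ 0 := by
    by_contra hpos
    push_neg at hpos
    have hfn : 0 ≤ ‖f‖ := norm_nonneg f
    have h1 := key (|f z| / (‖f‖ + 1)) (by positivity)
    have h2 : ‖f‖ * (|f z| / (‖f‖ + 1)) < |f z| := by
      rw [mul_div_assoc', div_lt_iff₀ (by positivity)]
      nlinarith
    linarith
  exact abs_eq_zero.mp (le_antisymm hle (abs_nonneg _))

/-- Composition with an injective `e : ℕ → Γ`, as a continuous linear map. -/
noncomputable def compFun (e : ℕ → Γ) (he : Injective e) (x : C₀(Γ, ℝ)) : C₀(ℕ, ℝ) where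
  toFun n := x (e n)
  continuous_toFun := continuous_of_discreteTopology
  zero_at_infty' := by
    rw [Filter.cocompact_eq_cofinite]
    have h := zero_at_infty (F := C₀(Γ, ℝ)) x
    rw [Filter.cocompact_eq_cofinite] at h
    exact h.comp he.tendsto_cofinite

noncomputable def compL (e : ℕ → Γ) (he : Injective e) : C₀(Γ, ℝ) →L[ℝ] C₀(ℕ, ℝ) :=
  LinearMap.mkContinuous
    { toFun := compFun e he
      map_add' := fun x y => by ext n; rfl
      map_smul' := fun c x => by ext n; rfl }
    1 (fun x => by
      rw [one_mul]
      exact norm_le_of _ (norm_nonneg x) fun n => apply_le_norm x (e n))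

@[simp] lemma compL_apply (e : ℕ → Γ) (he : Injective e) (x : C₀(Γ, ℝ)) (n : ℕ) :
    compL e he x n = x (e n) := rfl

/-- Extension by zero along an injective `e : ℕ → Γ`, as a continuous linear map. -/
noncomputable def extFun (e : ℕ → Γ) (he : Injective e) (y : C₀(ℕ, ℝ)) : C₀(Γ, ℝ) where
  toFun := Function.extend e (⇑y) 0
  continuous_toFun := continuous_of_discreteTopology
  zero_at_infty' := by
    rw [Filter.cocompact_eq_cofinite]
    intro s hs
    have h0 : (0 : ℝ) ∈ s := mem_of_mem_nhds hs
    have hy := zero_at_infty (F := C₀(ℕ, ℝ)) y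
    rw [Filter.cocompact_eq_cofinite] at hy
    have h2 : (⇑y) ⁻¹' s ∈ Filter.cofinite := Filter.mem_map.mp (hy hs)
    rw [Filter.mem_cofinite] at h2
    rw [Filter.mem_map, Filter.mem_cofinite]
    refine (h2.image e).subset fun γ hγ => ?_
    simp only [mem_compl_iff, mem_preimage] at hγ
    rcases em (∃ n, e n = γ) with ⟨n, rfl⟩ | hne
    · rw [he.extend_apply] at hγ
      exact ⟨n, hγ, rfl⟩
    · exact absurd (by rwa [Function.extend_apply' _ _ _ hne]) hγ

lemma extFun_apply_mem (e : ℕ → Γ) (he : Injective e) (y : C₀(ℕ, ℝ)) (n : ℕ) :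
    extFun e he y (e n) = y n := he.extend_apply _ _ n

lemma abs_extFun_le (e : ℕ → Γ) (he : Injective e) (y : C₀(ℕ, ℝ)) (γ : Γ) :
    |extFun e he y γ| ≤ ‖y‖ := by
  rcases em (∃ n, e n = γ) with ⟨n, rfl⟩ | hne
  · rw [extFun_apply_mem]
    exact apply_le_norm y n
  · have : extFun e he y γ = 0 := Function.extend_apply' _ _ _ hne
    rw [this]
    simpa using norm_nonneg y

noncomputable def extL (e : ℕ → Γ) (he : Injective e) : C₀(ℕ, ℝ) →L[ℝ] C₀(Γ, ℝ) :=
  LinearMap.mkContinuous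
    { toFun := extFun e he
      map_add' := fun x y => by
        ext γ
        rcases em (∃ n, e n = γ) with ⟨n, rfl⟩ | hne
        · simp [extFun_apply_mem]
        · have h1 : extFun e he (x + y) γ = 0 := Function.extend_apply' _ _ _ hne
          have h2 : extFun e he x γ = 0 := Function.extend_apply' _ _ _ hne
          have h3 : extFun e he y γ = 0 := Function.extend_apply' _ _ _ hne
          have : (extFun e he x + extFun e he y) γ = extFun e he x γ + extFun e he y γ := rfl
          rw [h1, this, h2, h3, add_zero]
      map_smul' := fun c x => by
        ext γ
        rcases em (∃ n, e n = γ) with ⟨n, rfl⟩ | hne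
        · simp [extFun_apply_mem]
        · have h1 : extFun e he (c • x) γ = 0 := Function.extend_apply' _ _ _ hne
          have h2 : extFun e he x γ = 0 := Function.extend_apply' _ _ _ hne
          have : (c • extFun e he x) γ = c * extFun e he x γ := rfl
          rw [h1, RingHom.id_apply, this, h2, mul_zero]
      }
    1 (fun y => by
      rw [one_mul]
      exact norm_le_of _ (norm_nonneg y) (abs_extFun_le e he y))

@[simp] lemma extL_apply (e : ℕ → Γ) (he : Injective e) (y : C₀(ℕ, ℝ)) (γ : Γ) :
    extL e he y γ = Function.extend e (⇑y) 0 γ := rfl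

/-- Norming sequence of functionals. -/
lemma eq_zero_of_norming {E : Type*} [NormedAddCommGroup E] [NormedSpace ℝ E]
    (u : ℕ → E) (hu : DenseRange u) (g : ℕ → E →L[ℝ] ℝ)
    (hg1 : ∀ n, ‖g n‖ ≤ 1) (hg2 : ∀ n, g n (u n) = ‖u n‖)
    (v : E) (hv : ∀ n, g n v = 0) : v = 0 := by
  by_contra h
  have hv0 : 0 < ‖v‖ := norm_pos_iff.mpr h
  obtain ⟨n, hn⟩ := Metric.denseRange_iff.mp hu v (‖v‖ / 2) (by positivity)
  rw [dist_eq_norm] at hn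
  have h1 : g n (u n - v) = ‖u n‖ := by rw [map_sub, hv n, sub_zero, hg2 n]
  have h2 : |g n (u n - v)| ≤ ‖u n - v‖ := by
    have := (g n).le_opNorm (u n - v)
    rw [Real.norm_eq_abs] at this
    nlinarith [hg1 n, norm_nonneg (u n - v)]
  have h3 : ‖u n - v‖ = ‖v - u n‖ := norm_sub_rev _ _
  have h4 : ‖v‖ ≤ ‖u n‖ + ‖v - u n‖ := by
    calc ‖v‖ = ‖u n + (v - u n)‖ := by congr 1; abel
      _ ≤ ‖u n‖ + ‖v - u n‖ := norm_add_le _ _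
  have h5 : ‖u n‖ ≤ |g n (u n - v)| := by rw [h1]; exact le_abs_self _
  nlinarith

end C0FactorAux

open C0FactorAux

/-- Every bounded operator `T` from `c₀(Γ)` (`Γ` uncountable) into a separable
Banach space `E` factors through `c₀ = c₀(ℕ)`: there are bounded operators
`U : c₀(Γ) → c₀` and `V : c₀ → E` with `T = V ∘ U`. Here `c₀(Γ)` is realised as
`C₀(Γ, ℝ)` for `Γ` discrete. -/
theorem operator_from_c0Gamma_factors_through_c0
    (Γ : Type*) [Uncountable Γ] [TopologicalSpace Γ] [DiscreteTopology Γ]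
    (E : Type*) [NormedAddCommGroup E] [NormedSpace ℝ E] [CompleteSpace E]
    [TopologicalSpace.SeparableSpace E]
    (T : C₀(Γ, ℝ) →L[ℝ] E) :
    ∃ (U : C₀(Γ, ℝ) →L[ℝ] C₀(ℕ, ℝ)) (V : C₀(ℕ, ℝ) →L[ℝ] E), T = V.comp U := by
  classical
  haveI : Nonempty E := ⟨0⟩
  obtain ⟨u, hu⟩ := TopologicalSpace.exists_dense_seq E
  choose g hg1 hg2 using fun n => exists_dual_vector'' ℝ (u n)
  set S : Set Γ := ⋃ n, {γ | ((g n).comp T) (sgl γ) ≠ 0} with hSdef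
  have hS : S.Countable := Set.countable_iUnion fun n => countable_support ((g n).comp T)
  -- complement infinite
  have hScinf : Sᶜ.Infinite := by
    intro hfin
    have : (Set.univ : Set Γ).Countable := by
      have : (S ∪ Sᶜ).Countable := hS.union hfin.countable
      simpa using this
    exact not_countable_univ this
  -- build a countably infinite superset of S
  set j : ℕ → Γ := fun n => ((Set.Infinite.natEmbedding _ hScinf) n : Γ) with hj
  have hjinj : Injective j :=
    Subtype.val_injective.comp (Set.Infinite.natEmbedding _ hScinf).injective
  set S' : Set Γ := S ∪ Set.range j with hS'
  have hS'c : S'.Countable := hS.union (Set.countable_range j)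
  have hS'inf : S'.Infinite := (Set.infinite_range_of_injective hjinj).mono Set.subset_union_right
  obtain ⟨den⟩ := Set.countable_infinite_iff_nonempty_denumerable.mp ⟨hS'c, hS'inf⟩
  set q : ℕ ≃ S' := (Denumerable.eqv S').symm
  set e : ℕ → Γ := fun n => (q n : Γ) with he'
  have he : Injective e := Subtype.val_injective.comp q.injective
  have hSrange : S ⊆ Set.range e := by
    intro γ hγ
    refine ⟨q.symm ⟨γ, Set.subset_union_left hγ⟩, ?_⟩
    simp [he']
  refine ⟨compL e he, T.comp (extL e he), ?_⟩
  ext x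
  simp only [ContinuousLinearMap.coe_comp', Function.comp_apply]
  have hz : T (x - extL e he (compL e he x)) = 0 := by
    refine eq_zero_of_norming u hu g hg1 (fun n => by exact_mod_cast hg2 n) _ fun n => ?_
    have : g n (T (x - extL e he (compL e he x)))
        = ((g n).comp T) (x - extL e he (compL e he x)) := rfl
    rw [this]
    refine apply_eq_zero _ _ fun γ hγ => ?_
    have hγS : γ ∈ S := Set.mem_iUnion.mpr ⟨n, hγ⟩
    obtain ⟨m, rfl⟩ := hSrange hγS
    have : (x - extL e he (compL e he x)) (e m)
        = x (e m) - extL e he (compL e he x) (e m) := rfl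
    rw [this, extL_apply, he.extend_apply]
    simp
  have h2 : T x - T (extL e he (compL e he x)) = 0 := by rw [← map_sub]; exact hz
  have h3 : T x = T (extL e he (compL e he x)) := sub_eq_zero.mp h2
  exact h3
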